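/- Let G be a connected graph, S, T ⊆ V(G), and let u be a vertex of degree 1 with unique neighbor v, where u ∈ S, |S| ≥ 2, and v ∉ T. Then G has an S-T-cut (R, B) with G[R] and G[B] connected, S ⊆ R, T ⊆ B, and |cut_G(R)| ≤ ℓ if and only if G − u has an (S∖{u}∪{v})-T-cut (R', B') with the same properties and |cut_{G−u}(R')| ≤ ℓ. -/
import Mathlib


/-- The set of edges of `G` with exactly one endpoint in `R`. -/
def cutEdges {V : Type*} (G : SimpleGraph V) (R : Set V) : Set (Sym2 V) :=
  {e | e ∈ G.edgeSet ∧ ∃ a b, e = s(a, b) ∧ a ∈ R ∧ b ∉ R}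

/-- `G` has an `S`-`T`-cut `(R, B)` (with `B = Rᶜ`) such that `G[R]` and `G[B]` are
connected and at most `ℓ` edges cross the cut. -/
def Solution {V : Type*} (G : SimpleGraph V) (S T : Set V) (ℓ : ℕ) : Prop :=
  ∃ R : Set V, S ⊆ R ∧ T ⊆ Rᶜ ∧ (G.induce R).Connected ∧ (G.induce Rᶜ).Connected ∧
    (cutEdges G R).ncard ≤ ℓ

open SimpleGraph

lemma pendant_avoid {W : Type*} {H : SimpleGraph W} {u₀ v₀ : W}
    (hN : ∀ w, H.Adj u₀ w → w = v₀) :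
    ∀ (n : ℕ) {x y : W} (p : H.Walk x y), p.length = n → x ≠ u₀ → y ≠ u₀ →
      ∃ q : H.Walk x y, u₀ ∉ q.support := by
  intro n
  induction n using Nat.strong_induction_on with
  | _ n ih =>
    intro x y p hn hx hy
    cases p with
    | nil => exact ⟨.nil, by simp [Ne.symm hx]⟩
    | @cons _ z _ h p' =>
      by_cases hz : z = u₀
      · subst hz
        cases p' with
        | nil => exact absurd rfl hy
        | @cons _ w _ h2 p'' =>
          have hw : w = x := (hN w h2).trans (hN x h.symm).symm
          subst hw
          simp only [Walk.length_cons] at hn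
          exact ih p''.length (by omega) p'' rfl hx hy
      · simp only [Walk.length_cons] at hn
        obtain ⟨q, hq⟩ := ih p'.length (by omega) p' rfl hz hy
        exact ⟨.cons h q, by simp [hq, Ne.symm hx]⟩

lemma walk_transfer {V : Type*} {G : SimpleGraph V} {R B : Set V} :
    ∀ {x y : ↥R} (p : (G.induce R).Walk x y), (∀ z ∈ p.support, (z : V) ∈ B) →
      ∀ (hx : (x : V) ∈ B) (hy : (y : V) ∈ B), (G.induce B).Reachable ⟨x, hx⟩ ⟨y, hy⟩ := by
  intro x y p
  induction p with
  | nil => exact fun _ hx hy => Reachable.refl _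
  | @cons a z c h p ih =>
    intro hs hx hy
    have hz : (z : V) ∈ B := hs z (by simp)
    exact ((show (G.induce B).Adj ⟨a, hx⟩ ⟨z, hz⟩ from h).reachable).trans
      (ih (fun w hw => hs w (by simp [hw])) hz hy)

lemma induce_diff_connected {V : Type*} {G : SimpleGraph V} {R : Set V} {u v : V}
    (hN : ∀ w, G.Adj u w → w = v) (hu : u ∈ R) (hv : v ∈ R) (hvu : v ≠ u)
    (hc : (G.induce R).Connected) : (G.induce (R \ {u})).Connected := by
  rw [connected_iff]
  refine ⟨?_, ⟨⟨v, hv, hvu⟩⟩⟩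
  rintro ⟨x, hxR, hxu⟩ ⟨y, hyR, hyu⟩
  obtain ⟨p⟩ := hc.preconnected ⟨x, hxR⟩ ⟨y, hyR⟩
  have hN' : ∀ w : ↥R, (G.induce R).Adj ⟨u, hu⟩ w → w = ⟨v, hv⟩ :=
    fun w hw => Subtype.ext (hN w hw)
  obtain ⟨q, hq⟩ := pendant_avoid hN' p.length p rfl
    (fun h => hxu (congrArg Subtype.val h)) (fun h => hyu (congrArg Subtype.val h))
  exact walk_transfer (B := R \ {u}) q
    (fun z hz => ⟨z.2, fun hzu => hq (by rwa [show z = ⟨u, hu⟩ from Subtype.ext hzu] at hz)⟩)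
    ⟨hxR, hxu⟩ ⟨hyR, hyu⟩

lemma induce_insert_connected {V : Type*} {G : SimpleGraph V} {R : Set V} {u v : V}
    (huv : G.Adj u v) (hv : v ∈ R) (hc : (G.induce R).Connected) :
    (G.induce (insert u R)).Connected := by
  rw [connected_iff_exists_forall_reachable]
  refine ⟨⟨v, Set.mem_insert_of_mem u hv⟩, ?_⟩
  rintro ⟨w, hw⟩
  by_cases hwu : w = u
  · subst hwu
    exact (show (G.induce (insert w R)).Adj ⟨v, Set.mem_insert_of_mem w hv⟩
      ⟨w, Set.mem_insert w R⟩ from huv.symm).reachable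
  · have hwR : w ∈ R := hw.resolve_left hwu
    exact (hc.preconnected ⟨v, hv⟩ ⟨w, hwR⟩).map
      (G.induceHomOfLE (Set.subset_insert u R)).toHom

noncomputable def induceInduceIso {V : Type*} (G : SimpleGraph V) (A : Set V) (R' : Set A) :
    (G.induce A).induce R' ≃g G.induce (Subtype.val '' R') where
  toEquiv := Equiv.Set.image Subtype.val R' Subtype.val_injective
  map_rel_iff' := by
    intro a b
    simp [Equiv.Set.image, Equiv.Set.imageOfInjOn]


lemma cutEdges_image {V : Type*} (G : SimpleGraph V) (u v : V)
    (hN : ∀ w, G.Adj u w → w = v) (R : Set V) (hu : u ∈ R) (hv : v ∈ R) :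
    Sym2.map (Subtype.val) '' cutEdges (G.induce {x | x ≠ u}) {x | (x : V) ∈ R}
      = cutEdges G R := by
  ext e
  constructor
  · rintro ⟨e', ⟨he', a, b, rfl, ha, hb⟩, rfl⟩
    exact ⟨(show (G.induce {x | x ≠ u}).Adj a b from he'), ↑a, ↑b, by simp, ha, hb⟩
  · rintro ⟨he, a, b, rfl, ha, hb⟩
    have hab : G.Adj a b := he
    have hbu : b ≠ u := fun h => hb (h ▸ hu)
    have hau : a ≠ u := by
      rintro rfl
      exact hb ((hN b hab) ▸ hv)
    exact ⟨s(⟨a, hau⟩, ⟨b, hbu⟩),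
      ⟨(show (G.induce {x | x ≠ u}).Adj ⟨a, hau⟩ ⟨b, hbu⟩ from hab),
        ⟨a, hau⟩, ⟨b, hbu⟩, rfl, ha, hb⟩, by simp⟩

theorem stmt13 {V : Type*} [Fintype V] (G : SimpleGraph V) (S T : Set V) (u v : V)
    (hconn : G.Connected) (hST : Disjoint S T)
    (hN : G.neighborSet u = {v})
    (huS : u ∈ S) (hS2 : 2 ≤ S.ncard) (hvT : v ∉ T) (ℓ : ℕ) :
    Solution G S T ℓ ↔
      Solution (G.induce {x | x ≠ u})
        {x | (x : V) ∈ (S \ {u}) ∪ {v}} {x | (x : V) ∈ T} ℓ := by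
  have hvmem : v ∈ G.neighborSet u := by rw [hN]; exact rfl
  have hadj : G.Adj u v := hvmem
  have hvu : v ≠ u := hadj.ne'
  have hN' : ∀ w, G.Adj u w → w = v := by
    intro w hw
    have hw' : w ∈ G.neighborSet u := hw
    rwa [hN] at hw'
  constructor
  · rintro ⟨R, hSR, hTR, hcR, hcB, hcut⟩
    have huR : u ∈ R := hSR huS
    obtain ⟨s, hsS, hsu⟩ := Set.exists_ne_of_one_lt_ncard (show 1 < S.ncard by omega) u
    have hvR : v ∈ R := by
      obtain ⟨p⟩ := hcR.preconnected ⟨u, huR⟩ ⟨s, hSR hsS⟩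
      have hnil : ¬ p.Nil := SimpleGraph.Walk.not_nil_of_ne
        (by intro h; exact hsu (congrArg Subtype.val h).symm)
      have h2 : G.Adj u ↑(p.getVert 1) := SimpleGraph.Walk.adj_snd hnil
      exact (hN' _ h2) ▸ (p.getVert 1).2
    refine ⟨{x : {x | x ≠ u} | (x : V) ∈ R}, ?_, ?_, ?_, ?_, ?_⟩
    · rintro ⟨x, hx⟩ hmem
      rcases hmem with ⟨hxS, _⟩ | hxv
      · exact hSR hxS
      · exact (show x = v from hxv) ▸ hvR
    · rintro ⟨x, hx⟩ hmem hxR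
      exact hTR hmem hxR
    · have him : Subtype.val '' {x : {x | x ≠ u} | (x : V) ∈ R} = R \ {u} := by
        ext x
        constructor
        · rintro ⟨⟨y, hy⟩, hyR, rfl⟩; exact ⟨hyR, hy⟩
        · rintro ⟨hxR, hxu⟩; exact ⟨⟨x, hxu⟩, hxR, rfl⟩
      rw [(induceInduceIso G {x | x ≠ u} _).connected_iff, him]
      exact induce_diff_connected hN' huR hvR hvu hcR
    · have him : Subtype.val '' ({x : {x | x ≠ u} | (x : V) ∈ R})ᶜ = Rᶜ := by
        ext x
        constructor
        · rintro ⟨⟨y, hy⟩, hyR, rfl⟩; exact hyR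
        · intro hxR; exact ⟨⟨x, fun h => hxR (h ▸ huR)⟩, hxR, rfl⟩
      rw [(induceInduceIso G {x | x ≠ u} _).connected_iff, him]
      exact hcB
    · rw [← Set.ncard_image_of_injective _ (Sym2.map.injective Subtype.val_injective),
        cutEdges_image G u v hN' R huR hvR]
      exact hcut
  · rintro ⟨R₁, hS1, hT1, hc1, hc2, hcut⟩
    have hvR1 : (⟨v, hvu⟩ : {x | x ≠ u}) ∈ R₁ := hS1 (Or.inr rfl)
    set Rv : Set V := Subtype.val '' R₁ with hRv
    have hvRv : v ∈ insert u Rv := Or.inr ⟨⟨v, hvu⟩, hvR1, rfl⟩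
    have hset : {x : {x | x ≠ u} | (x : V) ∈ insert u Rv} = R₁ := by
      ext ⟨x, hx⟩
      constructor
      · rintro (h | ⟨⟨y, hy⟩, hyR, h⟩)
        · exact absurd h hx
        · exact (show (⟨x, hx⟩ : {x | x ≠ u}) = ⟨y, hy⟩ from Subtype.ext h.symm) ▸ hyR
      · intro h; exact Or.inr ⟨⟨x, hx⟩, h, rfl⟩
    refine ⟨insert u Rv, ?_, ?_, ?_, ?_, ?_⟩
    · intro s hs
      by_cases hsu : s = u
      · exact Or.inl hsu
      · exact Or.inr ⟨⟨s, hsu⟩, hS1 (Or.inl ⟨hs, hsu⟩), rfl⟩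
    · intro t ht hmem
      rcases hmem with h | ⟨⟨y, hy⟩, hyR, rfl⟩
      · exact Set.disjoint_left.mp hST huS (h ▸ ht)
      · exact hT1 ht hyR
    · exact induce_insert_connected hadj ⟨⟨v, hvu⟩, hvR1, rfl⟩
        ((induceInduceIso G {x | x ≠ u} R₁).connected_iff.mp hc1)
    · have hcompl : (insert u Rv)ᶜ = Subtype.val '' R₁ᶜ := by
        ext x
        constructor
        · intro hx
          have hxu : x ≠ u := fun h => hx (Or.inl h)
          exact ⟨⟨x, hxu⟩, fun h => hx (Or.inr ⟨⟨x, hxu⟩, h, rfl⟩), rfl⟩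
        · rintro ⟨⟨y, hy⟩, hyR, rfl⟩ (h | ⟨⟨z, hz⟩, hzR, h⟩)
          · exact hy h
          · exact hyR ((show (⟨y, hy⟩ : {x | x ≠ u}) = ⟨z, hz⟩ from Subtype.ext h.symm) ▸ hzR)
      rw [hcompl, (induceInduceIso G {x | x ≠ u} R₁ᶜ).connected_iff.symm]
      exact hc2
    · rw [← cutEdges_image G u v hN' _ (Set.mem_insert u Rv) hvRv,
        Set.ncard_image_of_injective _ (Sym2.map.injective Subtype.val_injective), hset]
      exact hcut
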